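/- Let n be odd and M an n×n real matrix (indices taken modulo n) such that every 2×2 cyclic block sums to 4w, i.e. M_{i,j}+M_{i,j+1}+M_{i+1,j}+M_{i+1,j+1}=4w for all i,j, and the alternating sum ∑_{i,j}(-1)^{i+j}M_{i,j}=0. Then M is the zero matrix. -/

import Mathlib

lemma aux_per2 {n : ℕ} [NeZero n] (hn : Odd n) (f : ZMod n → ℝ)
    (hf : ∀ x, f (x + 2) = f x) (x y : ZMod n) : f x = f y := by
  have key : ∀ (k : ℕ) (x : ZMod n), f (x + 2 * k) = f x := by
    intro k
    induction k with
    | zero => simp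
    | succ k ih =>
      intro x
      have h1 : (x + 2 * ((k : ZMod n) + 1)) = (x + 2 * k) + 2 := by ring
      push_cast
      rw [h1, hf, ih]
  have hu : IsUnit (2 : ZMod n) := by
    have hc : Nat.Coprime 2 n := by
      have h1 : n % 2 = 1 := Nat.odd_iff.mp hn
      have : Nat.gcd 2 n = Nat.gcd (n % 2) 2 := Nat.gcd_rec 2 n
      unfold Nat.Coprime
      rw [this, h1]; rfl
    have := (ZMod.isUnit_iff_coprime 2 n).mpr hc
    simpa using this
  have h2 : (2 : ZMod n) * 2⁻¹ = 1 := ZMod.mul_inv_of_unit _ hu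
  set c : ZMod n := 2⁻¹ * (y - x) with hc
  have hy : x + 2 * ((c.val : ℕ) : ZMod n) = y := by
    have : ((c.val : ℕ) : ZMod n) = c := by
      simp [ZMod.natCast_val, ZMod.cast_id]
    rw [this, hc]
    calc x + 2 * (2⁻¹ * (y - x)) = x + (2 * 2⁻¹) * (y - x) := by ring
    _ = y := by rw [h2]; ring
  rw [← hy, key]

theorem stmt_0 (n : ℕ) [NeZero n] (hn : Odd n)
    (M : Matrix (ZMod n) (ZMod n) ℝ) (w : ℝ)
    (hblock : ∀ i j : ZMod n,
      M i j + M i (j + 1) + M (i + 1) j + M (i + 1) (j + 1) = 4 * w)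
    (halt : ∑ i : ZMod n, ∑ j : ZMod n, (-1 : ℝ) ^ (i.val + j.val) * M i j = 0) :
    M = 0 := by
  -- Step 1: row-pair sums are 2w
  have hs : ∀ i j : ZMod n, M i j + M i (j + 1) = 2 * w := by
    intro i j
    have hconst : ∀ a b : ZMod n,
        (M a j + M a (j+1)) = (M b j + M b (j+1)) := by
      apply aux_per2 hn (fun a => M a j + M a (j+1))
      intro x
      have h1 := hblock x j
      have h2 := hblock (x + 1) j
      have hx : x + 2 = x + 1 + 1 := by ring
      rw [hx]
      linarith
    have := hconst i (i + 1)
    have hb := hblock i j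
    linarith
  -- Step 2: M is constant = w
  have hw : ∀ i j : ZMod n, M i j = w := by
    intro i j
    have hconst : ∀ a b : ZMod n, M i a = M i b := by
      apply aux_per2 hn (fun a => M i a)
      intro x
      have h1 := hs i x
      have h2 := hs i (x + 1)
      have hx : x + 2 = x + 1 + 1 := by ring
      rw [hx]
      linarith
    have := hconst j (j + 1)
    have hb := hs i j
    linarith
  -- Step 3: alternating sum equals w
  have hsum1 : ∑ i : ZMod n, ((-1 : ℝ)) ^ i.val = 1 := by
    rw [Finset.sum_bij' (i := fun (a : ZMod n) _ => a.val)
      (j := fun (k : ℕ) (hk : k ∈ Finset.range n) => (k : ZMod n))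
      (hi := fun a _ => Finset.mem_range.mpr (ZMod.val_lt a))
      (hj := fun k hk => Finset.mem_univ _)
      (left_neg := fun a _ => by simp [ZMod.natCast_val, ZMod.cast_id])
      (right_neg := fun k hk => ZMod.val_cast_of_lt (Finset.mem_range.mp hk))
      (h := fun a _ => rfl)]
    rw [neg_one_geom_sum]
    simp [Nat.not_even_iff_odd.mpr hn]
  have halt' : ∑ i : ZMod n, ∑ j : ZMod n, (-1 : ℝ) ^ (i.val + j.val) * M i j = w := by
    calc ∑ i : ZMod n, ∑ j : ZMod n, (-1 : ℝ) ^ (i.val + j.val) * M i j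
        = ∑ i : ZMod n, ∑ j : ZMod n, ((-1 : ℝ) ^ i.val * (-1:ℝ) ^ j.val) * w := by
          apply Finset.sum_congr rfl; intro i _
          apply Finset.sum_congr rfl; intro j _
          rw [hw i j, pow_add]
      _ = (∑ i : ZMod n, (-1 : ℝ) ^ i.val) * (∑ j : ZMod n, (-1:ℝ) ^ j.val) * w := by
          rw [Finset.sum_mul, Finset.sum_mul]
          apply Finset.sum_congr rfl; intro i _
          simp [Finset.mul_sum, Finset.sum_mul, mul_assoc]
      _ = w := by rw [hsum1]; ring
  have hw0 : w = 0 := by rw [halt] at halt'; exact halt'.symm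
  ext i j
  simp [hw i j, hw0]
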